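/- Let k ∈ ℕ, let p ≥ 0 be a real number, and let F : Γ → ℂ satisfy ∑_{σ ∈ Γ} λ_σ^{-2p} |F(σ)|² < ∞. Then ∑_{σ ∈ Γ} λ_σ^{-2p} |(𝔞_k† F)(σ)|² converges and ‖𝔞_k† F‖_{-p} ≤ (1+k)^{-p} · ‖F‖_{-p}; that is, S_p* is invariant under the creation operator 𝔞_k†, which is bounded on it with norm at most (1+k)^{-p}. -/

import Mathlib

open scoped BigOperators

/-- `λ_σ = ∏_{k ∈ σ} (k+1)`, with `λ_∅ = 1`. -/
noncomputable def lam (σ : Finset ℕ) : ℝ := ∏ k ∈ σ, ((k : ℝ) + 1)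

/-- The creation operator: `(𝔞_k† F)(σ) = F(σ \ {k})` if `k ∈ σ`, else `0`. -/
def cre (k : ℕ) (F : Finset ℕ → ℂ) : Finset ℕ → ℂ :=
  fun σ => if k ∈ σ then F (σ.erase k) else 0

lemma lam_pos (σ : Finset ℕ) : 0 < lam σ := by
  refine Finset.prod_pos fun i _ => ?_
  positivity

lemma lam_insert {k : ℕ} {σ : Finset ℕ} (h : k ∈ σ) :
    lam σ = ((k : ℝ) + 1) * lam (σ.erase k) := by
  exact (Finset.mul_prod_erase σ (fun i => (i:ℝ)+1) h).symm

/-- `S_p*` is invariant under `𝔞_k†`, with `‖𝔞_k† F‖_{-p} ≤ (1+k)^{-p} ‖F‖_{-p}`. -/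
theorem stmt4 (k : ℕ) (p : ℝ) (hp : 0 ≤ p) (F : Finset ℕ → ℂ)
    (hF : Summable (fun σ : Finset ℕ => lam σ ^ (-(2 * p)) * ‖F σ‖ ^ 2)) :
    Summable (fun σ : Finset ℕ => lam σ ^ (-(2 * p)) * ‖cre k F σ‖ ^ 2) ∧
    Real.sqrt (∑' σ : Finset ℕ, lam σ ^ (-(2 * p)) * ‖cre k F σ‖ ^ 2)
      ≤ (1 + (k : ℝ)) ^ (-p) *
        Real.sqrt (∑' σ : Finset ℕ, lam σ ^ (-(2 * p)) * ‖F σ‖ ^ 2) := by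
  set f : Finset ℕ → ℝ := fun σ => lam σ ^ (-(2 * p)) * ‖F σ‖ ^ 2 with hf
  set g : Finset ℕ → ℝ := fun σ => lam σ ^ (-(2 * p)) * ‖cre k F σ‖ ^ 2 with hg
  have hk1 : (0 : ℝ) < 1 + (k : ℝ) := by positivity
  set c : ℝ := (1 + (k : ℝ)) ^ (-(2 * p)) with hc
  -- the injection
  set i : {τ : Finset ℕ // k ∉ τ} → Finset ℕ := fun τ => insert k τ.val with hi
  have hinj : Function.Injective i := by
    intro a b hab
    ext1
    have := congrArg (Finset.erase · k) hab
    simpa [hi, Finset.erase_insert a.2, Finset.erase_insert b.2] using this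
  have hsupp : ∀ σ, σ ∉ Set.range i → g σ = 0 := by
    intro σ hσ
    by_cases hk : k ∈ σ
    · exact absurd ⟨⟨σ.erase k, Finset.notMem_erase _ _⟩, by
        simp [hi, Finset.insert_erase hk]⟩ hσ
    · simp [hg, cre, hk]
  have hcomp : ∀ τ : {τ : Finset ℕ // k ∉ τ}, g (i τ) = c * f τ.val := by
    intro τ
    have hkin : k ∈ i τ := Finset.mem_insert_self _ _
    have herase : (i τ).erase k = τ.val := Finset.erase_insert τ.2
    have hlam : lam (i τ) = (1 + (k : ℝ)) * lam τ.val := by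
      rw [lam_insert hkin, herase]; ring_nf
    simp only [hg, hf, cre, if_pos hkin, herase, hlam]
    rw [Real.mul_rpow hk1.le (lam_pos _).le]
    ring
  have hfs : Summable fun τ : {τ : Finset ℕ // k ∉ τ} => c * f τ.val :=
    (hF.subtype _).mul_left c
  have hgs : Summable g := by
    rw [← Function.Injective.summable_iff hinj hsupp]
    exact hfs.congr fun τ => (hcomp τ).symm
  refine ⟨hgs, ?_⟩
  have htsum : (∑' σ, g σ) = c * ∑' τ : {τ : Finset ℕ // k ∉ τ}, f τ.val := by
    rw [← Function.Injective.tsum_eq hinj (by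
      intro σ hσ
      by_contra h
      exact hσ (hsupp σ h))]
    rw [tsum_congr hcomp, tsum_mul_left]
  have hfnn : ∀ σ, 0 ≤ f σ := fun σ => by
    have := (lam_pos σ).le
    positivity
  have hsub : (∑' τ : {τ : Finset ℕ // k ∉ τ}, f τ.val) ≤ ∑' σ, f σ :=
    Summable.tsum_le_tsum_of_inj (Subtype.val) Subtype.val_injective (fun σ _ => hfnn σ)
      (fun τ => le_rfl) (hF.subtype _) hF
  have hcnn : 0 ≤ c := Real.rpow_nonneg hk1.le _
  have hle : (∑' σ, g σ) ≤ c * ∑' σ, f σ := by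
    rw [htsum]; exact mul_le_mul_of_nonneg_left hsub hcnn
  have hcsq : c = ((1 + (k : ℝ)) ^ (-p)) ^ 2 := by
    rw [← Real.rpow_natCast ((1 + (k : ℝ)) ^ (-p)) 2, ← Real.rpow_mul hk1.le]
    norm_num; ring_nf
    rw [hc]; ring_nf
  calc Real.sqrt (∑' σ, g σ) ≤ Real.sqrt (c * ∑' σ, f σ) := Real.sqrt_le_sqrt hle
    _ = (1 + (k : ℝ)) ^ (-p) * Real.sqrt (∑' σ, f σ) := by
        rw [Real.sqrt_mul hcnn, hcsq, Real.sqrt_sq (Real.rpow_nonneg hk1.le _)]
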